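/- The number of noncrossing partial matchings of {1,...,2n} whose arcs form a perfect matching (every point matched) with no two arcs crossing equals C_n, and consequently the number of pairs (M1, M2) where M1 and M2 are noncrossing partial matchings on {1,...,2n} that partition {1,...,2n} into matched pairs (each point belongs to exactly one arc of M1 ∪ M2) equals C_n * C_{n+1}. -/

import Mathlib

/-- A partial matching on `Fin (2n)`: a set of arcs `(i,j)` with `i < j`, pairwise
disjoint. -/
def IsPartialMatching (n : ℕ) (M : Finset (Fin (2*n) × Fin (2*n))) : Prop :=
  (∀ p ∈ M, p.1 < p.2) ∧
  ∀ p ∈ M, ∀ q ∈ M, p ≠ q → p.1 ≠ q.1 ∧ p.1 ≠ q.2 ∧ p.2 ≠ q.1 ∧ p.2 ≠ q.2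

/-- The partial matching `M` has no crossing arcs. -/
def IsNoncrossingPM (n : ℕ) (M : Finset (Fin (2*n) × Fin (2*n))) : Prop :=
  ¬ ∃ p ∈ M, ∃ q ∈ M, p.1 < q.1 ∧ q.1 < p.2 ∧ p.2 < q.2

/-- The arcs of `M` cover every point. -/
def IsPerfect (n : ℕ) (M : Finset (Fin (2*n) × Fin (2*n))) : Prop :=
  ∀ x : Fin (2*n), ∃ p ∈ M, x = p.1 ∨ x = p.2

open Finset

namespace NCM

open Finset



variable {α : Type*} [LinearOrder α] {β : Type*} [LinearOrder β]

/-- partial matching -/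
def PM (M : Finset (α × α)) : Prop :=
  (∀ p ∈ M, p.1 < p.2) ∧
  ∀ p ∈ M, ∀ q ∈ M, p ≠ q → p.1 ≠ q.1 ∧ p.1 ≠ q.2 ∧ p.2 ≠ q.1 ∧ p.2 ≠ q.2

/-- noncrossing -/
def NC (M : Finset (α × α)) : Prop :=
  ¬ ∃ p ∈ M, ∃ q ∈ M, p.1 < q.1 ∧ q.1 < p.2 ∧ p.2 < q.2

/-- arcs lie in `S` and cover `S` -/
def Cov (S : Finset α) (M : Finset (α × α)) : Prop :=
  (∀ p ∈ M, p.1 ∈ S ∧ p.2 ∈ S) ∧ ∀ x ∈ S, ∃ p ∈ M, x = p.1 ∨ x = p.2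

lemma PM.mono {M M' : Finset (α × α)} (h : M' ⊆ M) (hM : PM M) : PM M' :=
  ⟨fun p hp => hM.1 p (h hp), fun p hp q hq hpq => hM.2 p (h hp) q (h hq) hpq⟩

lemma NC.mono {M M' : Finset (α × α)} (h : M' ⊆ M) (hM : NC M) : NC M' := by
  rintro ⟨p, hp, q, hq, h1, h2, h3⟩
  exact hM ⟨p, h hp, q, h hq, h1, h2, h3⟩

/-- the number of non-crossing perfect matchings on `S`. -/
noncomputable def ncount (S : Finset α) : ℕ :=
  Nat.card {M : Finset (α × α) // PM M ∧ NC M ∧ Cov S M}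

section transport

variable {f : α → β} (hf : StrictMono f)
include hf

lemma pm_map {M : Finset (α × α)} :
    PM (M.image (Prod.map f f)) ↔ PM M := by
  have hinj : Function.Injective (Prod.map f f) := hf.injective.prodMap hf.injective
  constructor
  · rintro ⟨h1, h2⟩
    constructor
    · intro p hp
      have := h1 _ (mem_image_of_mem _ hp)
      simpa [hf.lt_iff_lt] using this
    · intro p hp q hq hpq
      have := h2 _ (mem_image_of_mem _ hp) _ (mem_image_of_mem _ hq)
        (fun hc => hpq (hinj hc))
      simpa [hf.injective.ne_iff] using this
  · rintro ⟨h1, h2⟩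
    constructor
    · rintro p hp
      obtain ⟨q, hq, rfl⟩ := mem_image.mp hp
      simpa [hf.lt_iff_lt] using h1 q hq
    · rintro p hp q hq hpq
      obtain ⟨p', hp', rfl⟩ := mem_image.mp hp
      obtain ⟨q', hq', rfl⟩ := mem_image.mp hq
      have := h2 p' hp' q' hq' (fun hc => hpq (by rw [hc]))
      simpa [hf.injective.ne_iff] using this

lemma nc_map {M : Finset (α × α)} :
    NC (M.image (Prod.map f f)) ↔ NC M := by
  constructor
  · rintro h ⟨p, hp, q, hq, h1, h2, h3⟩
    exact h ⟨_, mem_image_of_mem _ hp, _, mem_image_of_mem _ hq,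
      hf h1, hf h2, hf h3⟩
  · rintro h ⟨p, hp, q, hq, h1, h2, h3⟩
    obtain ⟨p', hp', rfl⟩ := mem_image.mp hp
    obtain ⟨q', hq', rfl⟩ := mem_image.mp hq
    simp only [Prod.map_fst, Prod.map_snd, hf.lt_iff_lt] at h1 h2 h3
    exact h ⟨p', hp', q', hq', h1, h2, h3⟩

lemma cov_map {S : Finset α} {M : Finset (α × α)} :
    Cov (S.image f) (M.image (Prod.map f f)) ↔ Cov S M := by
  constructor
  · rintro ⟨h1, h2⟩
    constructor
    · intro p hp
      have := h1 _ (mem_image_of_mem _ hp)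
      obtain ⟨a, ha, ha'⟩ := mem_image.mp this.1
      obtain ⟨b, hb, hb'⟩ := mem_image.mp this.2
      exact ⟨by rwa [← hf.injective ha'], by rwa [← hf.injective hb']⟩
    · intro x hx
      obtain ⟨p, hp, hor⟩ := h2 (f x) (mem_image_of_mem _ hx)
      obtain ⟨p', hp', rfl⟩ := mem_image.mp hp
      rcases hor with h | h
      · exact ⟨p', hp', Or.inl (hf.injective h)⟩
      · exact ⟨p', hp', Or.inr (hf.injective h)⟩
  · rintro ⟨h1, h2⟩
    constructor
    · rintro p hp
      obtain ⟨p', hp', rfl⟩ := mem_image.mp hp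
      exact ⟨mem_image_of_mem _ (h1 p' hp').1, mem_image_of_mem _ (h1 p' hp').2⟩
    · intro x hx
      obtain ⟨y, hy, rfl⟩ := mem_image.mp hx
      obtain ⟨p, hp, hor⟩ := h2 y hy
      rcases hor with rfl | rfl
      · exact ⟨_, mem_image_of_mem _ hp, Or.inl rfl⟩
      · exact ⟨_, mem_image_of_mem _ hp, Or.inr rfl⟩

lemma ncount_image (S : Finset α) : ncount (S.image f) = ncount S := by
  classical
  have hinj : Function.Injective (Prod.map f f) :=
    hf.injective.prodMap hf.injective
  apply Nat.card_congr
  refine Equiv.symm ⟨fun M => ⟨M.1.image (Prod.map f f), ?_⟩,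
    fun M => ⟨M.1.preimage (Prod.map f f) hinj.injOn, ?_⟩, ?_, ?_⟩
  · exact ⟨(pm_map hf).mpr M.2.1, (nc_map hf).mpr M.2.2.1, (cov_map hf).mpr M.2.2.2⟩
  · obtain ⟨M, hpm, hnc, hcov⟩ := M
    have himg : (M.preimage (Prod.map f f) hinj.injOn).image (Prod.map f f) = M := by
      apply Finset.ext
      intro p
      simp only [mem_image, mem_preimage]
      constructor
      · rintro ⟨q, hq, rfl⟩; exact hq
      · intro hp
        obtain ⟨ha, hb⟩ := hcov.1 p hp
        obtain ⟨a, _, ha'⟩ := mem_image.mp ha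
        obtain ⟨b, _, hb'⟩ := mem_image.mp hb
        exact ⟨(a, b), by simp [Prod.map, ha', hb', ← Prod.ext_iff, hp], by simp [Prod.map, ha', hb', Prod.ext_iff]⟩
    refine ⟨(pm_map hf).mp ?_, (nc_map hf).mp ?_, (cov_map hf (S := S)).mp ?_⟩ <;>
      rw [himg] <;> assumption
  · rintro ⟨M, h⟩
    simp only [Subtype.mk.injEq]
    apply Finset.ext
    intro a
    rw [mem_preimage, mem_image]
    constructor
    · rintro ⟨b, hb, hba⟩; rwa [← hinj hba]
    · intro ha; exact ⟨a, ha, rfl⟩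
  · rintro ⟨M, hpm, hnc, hcov⟩
    simp only [Subtype.mk.injEq]
    apply Finset.ext
    intro p
    simp only [mem_image, mem_preimage]
    constructor
    · rintro ⟨q, hq, rfl⟩; exact hq
    · intro hp
      obtain ⟨ha, hb⟩ := hcov.1 p hp
      obtain ⟨a, _, ha'⟩ := mem_image.mp ha
      obtain ⟨b, _, hb'⟩ := mem_image.mp hb
      exact ⟨(a, b), by simp [Prod.map, ha', hb', ← Prod.ext_iff, hp], by simp [Prod.map, ha', hb', Prod.ext_iff]⟩

end transport

/-- transport to a canonical `Fin` model -/
lemma ncount_eq_of_card {k : ℕ} (S : Finset α) (h : S.card = k) :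
    ncount S = ncount (univ : Finset (Fin k)) := by
  have hmono : StrictMono (fun i : Fin k => ((S.orderIsoOfFin h i : α))) :=
    fun a b hab => by simpa using (S.orderIsoOfFin h).strictMono hab
  have himg : (univ : Finset (Fin k)).image (fun i => ((S.orderIsoOfFin h i : α))) = S := by
    apply Finset.ext
    intro x
    simp only [mem_image, mem_univ, true_and]
    constructor
    · rintro ⟨i, rfl⟩; exact (S.orderIsoOfFin h i).2
    · intro hx; exact ⟨(S.orderIsoOfFin h).symm ⟨x, hx⟩, by simp⟩
  rw [← himg, ncount_image hmono]


lemma card_eq_of_cov {S : Finset α} {M : Finset (α × α)} (hpm : PM M) (hcov : Cov S M) :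
    S.card = 2 * M.card := by
  classical
  have hS : S = M.biUnion (fun p => {p.1, p.2}) := by
    apply Finset.ext
    intro x
    simp only [mem_biUnion, mem_insert, mem_singleton]
    constructor
    · intro hx
      obtain ⟨p, hp, hor⟩ := hcov.2 x hx
      exact ⟨p, hp, by tauto⟩
    · rintro ⟨p, hp, h | h⟩ <;> subst h
      · exact (hcov.1 p hp).1
      · exact (hcov.1 p hp).2
  rw [hS, Finset.card_biUnion, Finset.sum_congr rfl (fun p hp => ?_), Finset.sum_const,
    smul_eq_mul, mul_comm]
  · exact Finset.card_pair (hpm.1 p hp).ne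
  · intro p hp q hq hpq
    have h4 := hpm.2 p hp q hq hpq
    simp only [Finset.disjoint_left, mem_insert, mem_singleton]
    rintro a (rfl | rfl) (h | h) <;> tauto

lemma ncount_odd {S : Finset α} (h : ¬ 2 ∣ S.card) : ncount S = 0 := by
  rw [ncount, Nat.card_eq_zero]
  left
  constructor
  rintro ⟨M, hpm, -, hcov⟩
  exact h ⟨M.card, card_eq_of_cov hpm hcov⟩

lemma ncount_fin_zero : ncount (univ : Finset (Fin 0)) = 1 := by
  rw [ncount]
  have : ∀ M : Finset (Fin 0 × Fin 0), M = ∅ := fun M =>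
    Finset.eq_empty_of_forall_notMem (fun x => (IsEmpty.false x.1).elim)
  rw [Nat.card_eq_one_iff_unique]
  constructor
  · constructor
    rintro ⟨M, -⟩ ⟨M', -⟩
    simp [this M, this M']
  · refine ⟨∅, ⟨fun p hp => absurd hp (notMem_empty p),
      fun p hp q hq _ => absurd hp (notMem_empty p)⟩, ?_,
      fun p hp => absurd hp (notMem_empty p),
      fun x => (IsEmpty.false x).elim⟩
    rintro ⟨p, hp, -⟩
    exact absurd hp (notMem_empty p)

lemma ncount_eq_filter {α : Type*} [LinearOrder α] [Fintype α] (S : Finset α)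
    [DecidablePred fun M : Finset (α × α) => PM M ∧ NC M ∧ Cov S M] :
    ncount S = (univ.filter fun M : Finset (α × α) => PM M ∧ NC M ∧ Cov S M).card := by
  rw [ncount, Nat.card_eq_fintype_card, Fintype.card_subtype]

section Fin
variable {m : ℕ} [NeZero m]

/-- the partner of `0` in `M` -/
noncomputable def key (M : Finset (Fin m × Fin m)) : Fin m :=
  M.sup (fun p => if p.1 = 0 then p.2 else 0)

lemma key_eq {M : Finset (Fin m × Fin m)} {j : Fin m} (hpm : PM M) (h : (0, j) ∈ M) :
    key M = j := by
  apply le_antisymm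
  · apply Finset.sup_le
    intro p hp
    by_cases h0 : p.1 = 0
    · rcases eq_or_ne p (0, j) with rfl | hne
      · simp
      · exact absurd h0 (hpm.2 p hp (0, j) h hne).1
    · simp only [h0, if_false]
      exact Fin.zero_le _
  · have := Finset.le_sup (f := fun p : Fin m × Fin m => if p.1 = 0 then p.2 else 0) h
    simp at this; exact this

lemma zero_arc {M : Finset (Fin m × Fin m)} (hpm : PM M) (hcov : Cov univ M) :
    (0, key M) ∈ M := by
  obtain ⟨p, hp, hor⟩ := hcov.2 0 (mem_univ 0)
  rcases hor with h | h
  · have : p = (0, p.2) := by rw [Prod.ext_iff]; exact ⟨h.symm, rfl⟩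
    rw [this] at hp
    rwa [key_eq hpm hp]
  · have hlt := hpm.1 p hp
    rw [Fin.lt_def, ← h] at hlt
    simp at hlt
end Fin

lemma fiber_card {m : ℕ} [NeZero m] (j : Fin m) (hj : j ≠ 0)
    [DecidablePred fun M : Finset (Fin m × Fin m) => PM M ∧ NC M ∧ Cov univ M]
    [DecidablePred fun M : Finset (Fin m × Fin m) => PM M ∧ NC M ∧ Cov (Ioo 0 j) M]
    [DecidablePred fun M : Finset (Fin m × Fin m) => PM M ∧ NC M ∧ Cov (Ioi j) M] :
    ((univ.filter fun M : Finset (Fin m × Fin m) => PM M ∧ NC M ∧ Cov univ M).filter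
      (fun M => key M = j)).card =
    (univ.filter fun M : Finset (Fin m × Fin m) => PM M ∧ NC M ∧ Cov (Ioo 0 j) M).card *
    (univ.filter fun M : Finset (Fin m × Fin m) => PM M ∧ NC M ∧ Cov (Ioi j) M).card := by
  have hjpos : (0 : Fin m) < j := (Fin.pos_iff_ne_zero' j).mpr hj
  rw [← Finset.card_product]
  set B1 := univ.filter fun M : Finset (Fin m × Fin m) => PM M ∧ NC M ∧ Cov (Ioo 0 j) M with hB1
  set B2 := univ.filter fun M : Finset (Fin m × Fin m) => PM M ∧ NC M ∧ Cov (Ioi j) M with hB2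
  -- facts about members of the fiber
  have fibfacts : ∀ M : Finset (Fin m × Fin m),
      (PM M ∧ NC M ∧ Cov univ M) → key M = j →
      (0, j) ∈ M ∧ ∀ p ∈ M, p ≠ (0, j) →
        (0 < p.1 ∧ p.1 < j ∧ 0 < p.2 ∧ p.2 < j) ∨ (j < p.1 ∧ j < p.2) := by
    rintro M ⟨hpm, hnc, hcov⟩ hkey
    have h0j : (0, j) ∈ M := hkey ▸ zero_arc hpm hcov
    refine ⟨h0j, fun p hp hne => ?_⟩
    obtain ⟨a1, a2, a3, a4⟩ := hpm.2 p hp (0, j) h0j hne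
    have hps := hpm.1 p hp
    rcases lt_trichotomy p.1 j with h1 | h1 | h1
    · left
      have h2 : p.2 < j := by
        rcases lt_trichotomy p.2 j with h | h | h
        · exact h
        · exact absurd h a4
        · exact absurd ⟨(0, j), h0j, p, hp, (Fin.pos_iff_ne_zero' _).mpr a1, h1, h⟩ hnc
      exact ⟨(Fin.pos_iff_ne_zero' _).mpr a1, h1, (Fin.pos_iff_ne_zero' _).mpr a3, h2⟩
    · exact absurd h1 a2
    · exact Or.inr ⟨h1, h1.trans hps⟩
  refine Finset.card_bij'
    (fun M _ => (M.filter (fun p => p.2 < j), M.filter (fun p => j < p.1)))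
    (fun q _ => insert ((0 : Fin m), j) (q.1 ∪ q.2)) ?_ ?_ ?_ ?_
  · -- forward membership
    intro M hM
    rw [mem_filter, mem_filter] at hM
    obtain ⟨⟨-, hpm, hnc, hcov⟩, hkey⟩ := hM
    obtain ⟨h0j, hsplit⟩ := fibfacts M ⟨hpm, hnc, hcov⟩ hkey
    rw [Finset.mem_product]
    constructor
    · rw [hB1, mem_filter]
      refine ⟨mem_univ _, PM.mono (filter_subset _ _) hpm, NC.mono (filter_subset _ _) hnc,
        ?_, ?_⟩
      · intro p hp
        rw [mem_filter] at hp
        obtain ⟨hpM, hp2⟩ := hp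
        have hne : p ≠ (0, j) := by rintro rfl; exact absurd hp2 (lt_irrefl j)
        rcases hsplit p hpM hne with ⟨c1, c2, c3, c4⟩ | ⟨c1, c2⟩
        · exact ⟨mem_Ioo.mpr ⟨c1, c2⟩, mem_Ioo.mpr ⟨c3, c4⟩⟩
        · exact absurd (c2.trans hp2) (lt_irrefl j)
      · intro x hx
        rw [mem_Ioo] at hx
        obtain ⟨p, hpM, hor⟩ := hcov.2 x (mem_univ x)
        have hne : p ≠ (0, j) := by
          rintro rfl
          rcases hor with h | h
          · exact absurd (h ▸ hx.1) (lt_irrefl _)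
          · exact absurd (h ▸ hx.2) (lt_irrefl _)
        rcases hsplit p hpM hne with ⟨c1, c2, c3, c4⟩ | ⟨c1, c2⟩
        · exact ⟨p, mem_filter.mpr ⟨hpM, c4⟩, hor⟩
        · rcases hor with h | h
          · exact absurd (h ▸ hx.2) (asymm c1).elim  -- x = p.1 > j but x < j
          · exact absurd (h ▸ hx.2) (asymm c2).elim
    · rw [hB2, mem_filter]
      refine ⟨mem_univ _, PM.mono (filter_subset _ _) hpm, NC.mono (filter_subset _ _) hnc,
        ?_, ?_⟩
      · intro p hp
        rw [mem_filter] at hp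
        obtain ⟨hpM, hp1⟩ := hp
        exact ⟨mem_Ioi.mpr hp1, mem_Ioi.mpr (hp1.trans (hpm.1 p hpM))⟩
      · intro x hx
        rw [mem_Ioi] at hx
        obtain ⟨p, hpM, hor⟩ := hcov.2 x (mem_univ x)
        have hne : p ≠ (0, j) := by
          rintro rfl
          rcases hor with h | h
          · exact absurd (h ▸ hx) (by simp [Fin.lt_def])
          · exact absurd (h ▸ hx) (lt_irrefl _)
        rcases hsplit p hpM hne with ⟨c1, c2, c3, c4⟩ | ⟨c1, c2⟩
        · rcases hor with h | h
          · exact absurd (h ▸ hx) (asymm c2).elim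
          · exact absurd (h ▸ hx) (asymm c4).elim
        · exact ⟨p, mem_filter.mpr ⟨hpM, c1⟩, hor⟩
  · -- backward membership
    rintro ⟨M1, M2⟩ hq
    rw [Finset.mem_product, hB1, hB2, mem_filter, mem_filter] at hq
    obtain ⟨⟨-, pm1, nc1, cov1⟩, ⟨-, pm2, nc2, cov2⟩⟩ := hq
    have he1 : ∀ p ∈ M1, 0 < p.1.val ∧ p.1.val < j.val ∧ 0 < p.2.val ∧ p.2.val < j.val := by
      intro p hp
      obtain ⟨h1, h2⟩ := cov1.1 p hp
      rw [mem_Ioo] at h1 h2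
      exact ⟨h1.1, h1.2, h2.1, h2.2⟩
    have he2 : ∀ p ∈ M2, j.val < p.1.val ∧ j.val < p.2.val := by
      intro p hp
      obtain ⟨h1, h2⟩ := cov2.1 p hp
      rw [mem_Ioi] at h1 h2
      exact ⟨h1, h2⟩
    set N := insert ((0 : Fin m), j) (M1 ∪ M2) with hN
    have memN : ∀ p, p ∈ N ↔ p = (0, j) ∨ p ∈ M1 ∨ p ∈ M2 := by
      intro p; simp [hN, mem_insert, mem_union]
    have pmN : PM N := by
      constructor
      · intro p hp
        rcases (memN p).mp hp with rfl | h | h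
        · exact hjpos
        · exact pm1.1 p h
        · exact pm2.1 p h
      · intro p hp q hq hne
        rcases (memN p).mp hp with rfl | h | h <;> rcases (memN q).mp hq with rfl | h' | h'
        · exact absurd rfl hne
        · obtain ⟨a1, a2, a3, a4⟩ := he1 q h'
          refine ⟨?_, ?_, ?_, ?_⟩ <;> (simp only [Ne, Fin.ext_iff, Fin.val_zero]; omega)
        · obtain ⟨a1, a2⟩ := he2 q h'
          refine ⟨?_, ?_, ?_, ?_⟩ <;> (simp only [Ne, Fin.ext_iff, Fin.val_zero]; omega)
        · obtain ⟨a1, a2, a3, a4⟩ := he1 p h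
          refine ⟨?_, ?_, ?_, ?_⟩ <;> (simp only [Ne, Fin.ext_iff, Fin.val_zero]; omega)
        · exact pm1.2 p h q h' hne
        · obtain ⟨a1, a2, a3, a4⟩ := he1 p h
          obtain ⟨b1, b2⟩ := he2 q h'
          refine ⟨?_, ?_, ?_, ?_⟩ <;> (simp only [Ne, Fin.ext_iff]; omega)
        · obtain ⟨a1, a2⟩ := he2 p h
          refine ⟨?_, ?_, ?_, ?_⟩ <;> (simp only [Ne, Fin.ext_iff, Fin.val_zero]; omega)
        · obtain ⟨a1, a2⟩ := he2 p h
          obtain ⟨b1, b2, b3, b4⟩ := he1 q h'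
          refine ⟨?_, ?_, ?_, ?_⟩ <;> (simp only [Ne, Fin.ext_iff]; omega)
        · exact pm2.2 p h q h' hne
    have ncN : NC N := by
      rintro ⟨p, hp, q, hq, c1, c2, c3⟩
      rw [Fin.lt_def] at c1 c2 c3
      rcases (memN p).mp hp with rfl | h | h <;> rcases (memN q).mp hq with rfl | h' | h'
      · omega
      · obtain ⟨a1, a2, a3, a4⟩ := he1 q h'
        simp only [Fin.val_zero] at c1 c2 c3
        omega
      · obtain ⟨a1, a2⟩ := he2 q h'
        simp only [Fin.val_zero] at c1 c2 c3
        omega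
      · obtain ⟨a1, a2, a3, a4⟩ := he1 p h
        simp only [Fin.val_zero] at c1 c2 c3
        omega
      · exact nc1 ⟨p, h, q, h', Fin.lt_def.mpr c1, Fin.lt_def.mpr c2, Fin.lt_def.mpr c3⟩
      · obtain ⟨a1, a2, a3, a4⟩ := he1 p h
        obtain ⟨b1, b2⟩ := he2 q h'
        omega
      · obtain ⟨a1, a2⟩ := he2 p h
        simp only [Fin.val_zero] at c1 c2 c3
        omega
      · obtain ⟨a1, a2⟩ := he2 p h
        obtain ⟨b1, b2, b3, b4⟩ := he1 q h'
        omega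
      · exact nc2 ⟨p, h, q, h', Fin.lt_def.mpr c1, Fin.lt_def.mpr c2, Fin.lt_def.mpr c3⟩
    have covN : Cov univ N := by
      refine ⟨fun p _ => ⟨mem_univ _, mem_univ _⟩, fun x _ => ?_⟩
      rcases lt_trichotomy x j with h | h | h
      · rcases eq_or_ne x 0 with rfl | hx0
        · exact ⟨(0, j), (memN _).mpr (Or.inl rfl), Or.inl rfl⟩
        · obtain ⟨p, hp, hor⟩ := cov1.2 x (mem_Ioo.mpr ⟨(Fin.pos_iff_ne_zero' _).mpr hx0, h⟩)
          exact ⟨p, (memN p).mpr (Or.inr (Or.inl hp)), hor⟩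
      · exact ⟨(0, j), (memN _).mpr (Or.inl rfl), Or.inr h⟩
      · obtain ⟨p, hp, hor⟩ := cov2.2 x (mem_Ioi.mpr h)
        exact ⟨p, (memN p).mpr (Or.inr (Or.inr hp)), hor⟩
    rw [mem_filter, mem_filter]
    exact ⟨⟨mem_univ _, pmN, ncN, covN⟩, key_eq pmN ((memN _).mpr (Or.inl rfl))⟩
  · -- left inverse
    intro M hM
    rw [mem_filter, mem_filter] at hM
    obtain ⟨⟨-, hpm, hnc, hcov⟩, hkey⟩ := hM
    obtain ⟨h0j, hsplit⟩ := fibfacts M ⟨hpm, hnc, hcov⟩ hkey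
    apply Finset.ext
    intro p
    simp only [mem_insert, mem_union, mem_filter]
    constructor
    · rintro (rfl | ⟨h, -⟩ | ⟨h, -⟩) <;> first | exact h0j | exact h
    · intro hp
      rcases eq_or_ne p (0, j) with rfl | hne
      · exact Or.inl rfl
      · rcases hsplit p hp hne with ⟨-, -, -, c4⟩ | ⟨c1, -⟩
        · exact Or.inr (Or.inl ⟨hp, c4⟩)
        · exact Or.inr (Or.inr ⟨hp, c1⟩)
  · -- right inverse
    rintro ⟨M1, M2⟩ hq
    rw [Finset.mem_product, hB1, hB2, mem_filter, mem_filter] at hq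
    obtain ⟨⟨-, pm1, nc1, cov1⟩, ⟨-, pm2, nc2, cov2⟩⟩ := hq
    have he1 : ∀ p ∈ M1, p.1 < j ∧ p.2 < j := by
      intro p hp
      obtain ⟨h1, h2⟩ := cov1.1 p hp
      rw [mem_Ioo] at h1 h2
      exact ⟨h1.2, h2.2⟩
    have he2 : ∀ p ∈ M2, j < p.1 ∧ j < p.2 := by
      intro p hp
      obtain ⟨h1, h2⟩ := cov2.1 p hp
      rw [mem_Ioi] at h1 h2
      exact ⟨h1, h2⟩
    have : ∀ (x : Finset (Fin m × Fin m) × Finset (Fin m × Fin m)), x.1 = M1 → x.2 = M2 → x = (M1, M2) := by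
      rintro ⟨x1, x2⟩ rfl rfl; rfl
    apply this
    · apply Finset.ext
      intro p
      simp only [mem_filter, mem_insert, mem_union]
      constructor
      · rintro ⟨rfl | h | h, hlt⟩
        · exact absurd hlt (lt_irrefl j)
        · exact h
        · exact absurd ((he2 p h).2.trans hlt) (lt_irrefl j)
      · intro hp
        exact ⟨Or.inr (Or.inl hp), (he1 p hp).2⟩
    · apply Finset.ext
      intro p
      simp only [mem_filter, mem_insert, mem_union]
      constructor
      · rintro ⟨rfl | h | h, hlt⟩
        · exact absurd hlt (by simp)
        · exact absurd (hlt.trans (he1 p h).1) (lt_irrefl j)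
        · exact h
      · intro hp
        exact ⟨Or.inr (Or.inr hp), (he2 p hp).1⟩


/-- number of noncrossing perfect matchings on `2k` points -/
noncomputable def F (k : ℕ) : ℕ := ncount (univ : Finset (Fin (2*k)))

lemma sum_range_two_mul (k : ℕ) (h : ℕ → ℕ) :
    ∑ v ∈ range (2*k), h v = ∑ i ∈ range k, (h (2*i) + h (2*i+1)) := by
  induction k with
  | zero => simp
  | succ k ih =>
    have : 2*(k+1) = (2*k+1)+1 := by ring
    rw [this, Finset.sum_range_succ, Finset.sum_range_succ, ih, Finset.sum_range_succ]
    omega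

theorem F_succ (n : ℕ) : F (n+1) = ∑ i ∈ range (n+1), F i * F (n - i) := by
  classical
  haveI : NeZero (2*(n+1)) := ⟨by omega⟩
  set h : ℕ → ℕ := fun v => if v % 2 = 1 then F (v/2) * F (n - v/2) else 0 with hh
  have key1 : F (n+1) = ∑ v ∈ range (2*(n+1)), h v := by
    rw [F, ncount_eq_filter,
      Finset.card_eq_sum_card_fiberwise (f := key) (t := univ) (fun M _ => mem_univ _),
      ← Fin.sum_univ_eq_sum_range]
    apply Finset.sum_congr rfl
    intro j _
    rcases eq_or_ne j 0 with rfl | hj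
    · rw [hh]
      simp only [Fin.val_zero]
      norm_num
      intro M hpm _ hcov hkey
      have h0 := hpm.1 _ (zero_arc hpm hcov)
      rw [hkey] at h0
      exact absurd h0 (lt_irrefl _)
    · rw [fiber_card j hj, ← ncount_eq_filter, ← ncount_eq_filter]
      have hcioo : (Ioo (0 : Fin (2*(n+1))) j).card = j.val - 1 := by
        rw [Fin.card_Ioo]
        simp
      have hcioi : (Ioi j).card = 2*(n+1) - 1 - j.val := by
        rw [Fin.card_Ioi]
      have hjval : j.val ≠ 0 := fun hc => hj (Fin.ext (by simpa using hc))
      have hjlt : j.val < 2*(n+1) := j.isLt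
      rcases Nat.even_or_odd j.val with he | ho
      · have : ¬ 2 ∣ (Ioo (0 : Fin (2*(n+1))) j).card := by
          rw [hcioo]
          obtain ⟨t, ht⟩ := he
          omega
        rw [ncount_odd this, zero_mul, hh]
        have : j.val % 2 = 0 := by
          obtain ⟨t, ht⟩ := he
          omega
        simp [this]
      · obtain ⟨i, hi⟩ := ho
        have h1 : ncount (Ioo (0 : Fin (2*(n+1))) j) = F i := by
          rw [F]
          apply ncount_eq_of_card
          rw [hcioo]; omega
        have h2 : ncount (Ioi j) = F (n - i) := by
          rw [F]
          apply ncount_eq_of_card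
          rw [hcioi]; omega
        rw [h1, h2, hh]
        have hm : j.val % 2 = 1 := by omega
        have hd : j.val / 2 = i := by omega
        simp [hm, hd]
  rw [key1, sum_range_two_mul]
  apply Finset.sum_congr rfl
  intro i hi
  rw [hh]
  have h1 : (2*i) % 2 = 0 := by omega
  have h2 : (2*i+1) % 2 = 1 := by omega
  have h3 : (2*i+1) / 2 = i := by omega
  simp [h1, h2, h3]

theorem F_eq_catalan (n : ℕ) : F n = catalan n := by
  induction n using Nat.strong_induction_on with
  | _ n ih =>
    match n with
    | 0 =>
      rw [catalan_zero, F]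
      rw [ncount_eq_of_card (univ : Finset (Fin (2*0))) (k := 0) (by simp)]
      exact ncount_fin_zero
    | (n+1) =>
      rw [F_succ, catalan_succ,
        Fin.sum_univ_eq_sum_range (fun i => catalan i * catalan (n - i)) (n+1)]
      apply Finset.sum_congr rfl
      intro i hi
      rw [mem_range] at hi
      rw [ih i (by omega), ih (n - i) (by omega)]

lemma ncount_eq_catalan {α : Type*} [LinearOrder α] (S : Finset α) {i : ℕ}
    (h : S.card = 2*i) : ncount S = catalan i := by
  rw [ncount_eq_of_card S h]
  exact F_eq_catalan i

variable {α : Type*} [LinearOrder α]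

/-- support of a matching -/
def supp (M : Finset (α × α)) : Finset α := M.biUnion (fun p => {p.1, p.2})

/-- the pair predicate -/
def Q [DecidableEq (α × α)] (S : Finset α) (q : Finset (α × α) × Finset (α × α)) : Prop :=
  PM q.1 ∧ NC q.1 ∧ PM q.2 ∧ NC q.2 ∧ Disjoint q.1 q.2 ∧ PM (q.1 ∪ q.2) ∧ Cov S (q.1 ∪ q.2)

lemma pair_fiber [Fintype α] [DecidableEq (α × α)] (S T : Finset α)
    (hT : ∀ x, x ∈ T ↔ x ∉ S)
    [DecidablePred (Q (univ : Finset α))]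
    [DecidablePred fun q : Finset (α × α) × Finset (α × α) => supp q.1 = S]
    [DecidablePred fun M : Finset (α × α) => PM M ∧ NC M ∧ Cov S M]
    [DecidablePred fun M : Finset (α × α) => PM M ∧ NC M ∧ Cov T M] :
    ((univ.filter (Q (univ : Finset α))).filter (fun q => supp q.1 = S)) =
      (univ.filter fun M : Finset (α × α) => PM M ∧ NC M ∧ Cov S M) ×ˢ
      (univ.filter fun M : Finset (α × α) => PM M ∧ NC M ∧ Cov T M) := by
  apply Finset.ext
  rintro ⟨M1, M2⟩
  simp only [mem_filter, mem_univ, true_and, Finset.mem_product]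
  constructor
  · rintro ⟨⟨pm1, nc1, pm2, nc2, hdisj, pmu, covu⟩, hsupp⟩
    have hsub : ∀ p ∈ M1, p.1 ∈ S ∧ p.2 ∈ S := by
      intro p hp
      rw [← hsupp]
      exact ⟨mem_biUnion.mpr ⟨p, hp, by simp⟩, mem_biUnion.mpr ⟨p, hp, by simp⟩⟩
    have cov1 : Cov S M1 := by
      refine ⟨hsub, fun x hx => ?_⟩
      rw [← hsupp] at hx
      obtain ⟨p, hp, hx2⟩ := mem_biUnion.mp hx
      simp only [mem_insert, mem_singleton] at hx2
      exact ⟨p, hp, hx2⟩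
    have hd := Finset.disjoint_left.mp hdisj
    have cov2 : Cov T M2 := by
      constructor
      · intro p hp
        have hne : ∀ q ∈ M1, p ≠ q := fun q hq hc => hd (hc ▸ hq) hp
        constructor <;>
        · rw [hT, ← hsupp]
          intro hmem
          obtain ⟨q, hq, hx2⟩ := mem_biUnion.mp hmem
          simp only [mem_insert, mem_singleton] at hx2
          have four := pmu.2 p (mem_union_right _ hp) q (mem_union_left _ hq) (hne q hq)
          rcases hx2 with h | h
          · first
              | exact four.1 h
              | exact four.2.2.1 h
          · first
              | exact four.2.1 h
              | exact four.2.2.2 h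
      · intro x hx
        obtain ⟨p, hp, hor⟩ := covu.2 x (mem_univ x)
        rcases mem_union.mp hp with h | h
        · exfalso
          apply (hT x).mp hx
          rw [← hsupp]
          apply mem_biUnion.mpr ⟨p, h, ?_⟩
          simp only [mem_insert, mem_singleton]
          tauto
        · exact ⟨p, h, hor⟩
    exact ⟨⟨pm1, nc1, cov1⟩, pm2, nc2, cov2⟩
  · rintro ⟨⟨pm1, nc1, cov1⟩, pm2, nc2, cov2⟩
    have hcompl : ∀ a : α, a ∈ S → a ∈ T → False := fun a h1 h2 => (hT a).mp h2 h1
    have hdisj : Disjoint M1 M2 := by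
      rw [Finset.disjoint_left]
      intro p hp1 hp2
      exact hcompl p.1 (cov1.1 p hp1).1 (cov2.1 p hp2).1
    have pmu : PM (M1 ∪ M2) := by
      constructor
      · intro p hp
        rcases mem_union.mp hp with h | h
        · exact pm1.1 p h
        · exact pm2.1 p h
      · intro p hp q hq hne
        rcases mem_union.mp hp with h | h <;> rcases mem_union.mp hq with h' | h'
        · exact pm1.2 p h q h' hne
        · obtain ⟨a1, a2⟩ := cov1.1 p h
          obtain ⟨b1, b2⟩ := cov2.1 q h'
          exact ⟨fun hc => hcompl _ a1 (hc ▸ b1), fun hc => hcompl _ a1 (hc ▸ b2),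
            fun hc => hcompl _ a2 (hc ▸ b1), fun hc => hcompl _ a2 (hc ▸ b2)⟩
        · obtain ⟨a1, a2⟩ := cov2.1 p h
          obtain ⟨b1, b2⟩ := cov1.1 q h'
          exact ⟨fun hc => hcompl _ b1 (hc ▸ a1), fun hc => hcompl _ b2 (hc ▸ a1),
            fun hc => hcompl _ b1 (hc ▸ a2), fun hc => hcompl _ b2 (hc ▸ a2)⟩
        · exact pm2.2 p h q h' hne
    have covu : Cov univ (M1 ∪ M2) := by
      refine ⟨fun p _ => ⟨mem_univ _, mem_univ _⟩, fun x _ => ?_⟩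
      by_cases hx : x ∈ S
      · obtain ⟨p, hp, hor⟩ := cov1.2 x hx
        exact ⟨p, mem_union_left _ hp, hor⟩
      · obtain ⟨p, hp, hor⟩ := cov2.2 x ((hT x).mpr hx)
        exact ⟨p, mem_union_right _ hp, hor⟩
    refine ⟨⟨pm1, nc1, pm2, nc2, hdisj, pmu, covu⟩, ?_⟩
    apply Finset.ext
    intro x
    rw [supp, mem_biUnion]
    constructor
    · rintro ⟨p, hp, hx⟩
      simp only [mem_insert, mem_singleton] at hx
      rcases hx with rfl | rfl
      · exact (cov1.1 p hp).1
      · exact (cov1.1 p hp).2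
    · intro hx
      obtain ⟨p, hp, hor⟩ := cov1.2 x hx
      exact ⟨p, hp, by simp only [mem_insert, mem_singleton]; tauto⟩

theorem pairs_count (n : ℕ) [DecidablePred (Q (univ : Finset (Fin (2*n))))] :
    (univ.filter (Q (univ : Finset (Fin (2*n))))).card =
      ∑ i ∈ range (n+1), (2*n).choose (2*i) * (catalan i * catalan (n-i)) := by
  classical
  set f : ℕ → ℕ := fun j => if j % 2 = 0 then catalan (j/2) * catalan (n - j/2) else 0 with hf
  have step1 : (univ.filter (Q (univ : Finset (Fin (2*n))))).card =
      ∑ S ∈ (univ : Finset (Finset (Fin (2*n)))), f S.card := by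
    rw [Finset.card_eq_sum_card_fiberwise
      (f := fun q : Finset (Fin (2*n) × Fin (2*n)) × Finset (Fin (2*n) × Fin (2*n)) => supp q.1)
      (t := univ) (fun q _ => mem_univ _)]
    apply Finset.sum_congr rfl
    intro S _
    rw [pair_fiber S Sᶜ (fun x => mem_compl), Finset.card_product,
      ← ncount_eq_filter, ← ncount_eq_filter]
    have hScard : S.card ≤ 2*n := by
      have := Finset.card_le_card (Finset.subset_univ S)
      simpa using this
    have hcompl : Sᶜ.card = 2*n - S.card := by
      rw [Finset.card_compl]
      simp
    rcases Nat.even_or_odd S.card with he | ho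
    · obtain ⟨i, hi⟩ := he
      have h1 : ncount S = catalan i := ncount_eq_catalan S (by omega)
      have h2 : ncount Sᶜ = catalan (n - i) := ncount_eq_catalan Sᶜ (by omega)
      rw [h1, h2, hf]
      have e1 : S.card % 2 = 0 := by omega
      have e2 : S.card / 2 = i := by omega
      simp [e1, e2]
    · have h1 : ncount S = 0 := ncount_odd (by obtain ⟨i, hi⟩ := ho; omega)
      rw [h1, zero_mul, hf]
      have e1 : ¬ (S.card % 2 = 0) := by obtain ⟨i, hi⟩ := ho; omega
      simp [e1]
  rw [step1, ← Finset.powerset_univ, Finset.sum_powerset_apply_card]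
  have hcard : (univ : Finset (Fin (2*n))).card = 2*n := by simp
  rw [hcard]
  have step2 : ∀ m : ℕ, (2*n).choose m • f m = (2*n).choose m * f m := fun m => nsmul_eq_mul _ _
  rw [Finset.sum_congr rfl (fun m _ => step2 m)]
  have h2n1 : 2*n+1 = (2*n)+1 := rfl
  rw [Finset.sum_range_succ, sum_range_two_mul n (fun m => (2*n).choose m * f m)]
  have hodd : ∀ i, f (2*i+1) = 0 := by
    intro i
    rw [hf]
    have : ¬((2*i+1) % 2 = 0) := by omega
    simp [this]
  have heven : ∀ i, i ≤ n → (2*n).choose (2*i) * f (2*i) =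
      (2*n).choose (2*i) * (catalan i * catalan (n-i)) := by
    intro i hi
    rw [hf]
    have e1 : (2*i) % 2 = 0 := by omega
    have e2 : (2*i) / 2 = i := by omega
    simp [e1, e2]
  have hlast : (2*n).choose (2*n) * f (2*n) =
      (2*n).choose (2*n) * (catalan n * catalan (n-n)) := by
    have := heven n (le_refl n)
    have e : 2*n = 2*n := rfl
    simpa using this
  calc (∑ i ∈ range n, ((2*n).choose (2*i) * f (2*i) + (2*n).choose (2*i+1) * f (2*i+1)))
        + (2*n).choose (2*n) * f (2*n)
      = (∑ i ∈ range n, (2*n).choose (2*i) * (catalan i * catalan (n-i)))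
        + (2*n).choose (2*n) * (catalan n * catalan (n-n)) := by
        rw [hlast]
        congr 1
        apply Finset.sum_congr rfl
        intro i hi
        rw [mem_range] at hi
        rw [hodd i, mul_zero, add_zero, heven i (by omega)]
    _ = ∑ i ∈ range (n+1), (2*n).choose (2*i) * (catalan i * catalan (n-i)) :=
        (Finset.sum_range_succ _ _).symm

section Arith
open Nat

lemma catalan_factorial (i : ℕ) :
    catalan i * (i.factorial * (i+1).factorial) = (2*i).factorial := by
  have h1 : (i+1) * catalan i = (2*i).choose i := by
    rw [succ_mul_catalan_eq_centralBinom, centralBinom]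
  have h2 : (2*i).choose i * (i.factorial * i.factorial) = (2*i).factorial := by
    have := Nat.choose_mul_factorial_mul_factorial (show i ≤ 2*i by omega)
    have he : 2*i - i = i := by omega
    rw [he] at this
    rw [← this]; ring
  calc catalan i * (i.factorial * (i+1).factorial)
      = ((i+1) * catalan i) * (i.factorial * i.factorial) := by
        rw [Nat.factorial_succ]; ring
    _ = (2*i).choose i * (i.factorial * i.factorial) := by rw [h1]
    _ = (2*i).factorial := h2

lemma term_eq (n i : ℕ) (hi : i ≤ n) :
    (2*n).choose (2*i) * (catalan i * catalan (n-i)) * ((n+1).factorial * (n+1).factorial)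
      = (2*n).factorial * ((n+1).choose i * ((n+1).choose (i+1))) := by
  set D := i.factorial * (i+1).factorial * ((n-i).factorial * (n-i+1).factorial) with hD
  have hDpos : 0 < D := by positivity
  apply Nat.eq_of_mul_eq_mul_right hDpos
  have e1 := catalan_factorial i
  have e2 := catalan_factorial (n-i)
  have e3 : (2*n).choose (2*i) * ((2*i).factorial * (2*(n-i)).factorial) = (2*n).factorial := by
    have := Nat.choose_mul_factorial_mul_factorial (show 2*i ≤ 2*n by omega)
    have he : 2*n - 2*i = 2*(n-i) := by omega
    rw [he] at this
    rw [← this]; ring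
  have e4 : (n+1).choose i * (i.factorial * (n+1-i).factorial) = (n+1).factorial := by
    have := Nat.choose_mul_factorial_mul_factorial (show i ≤ n+1 by omega)
    rw [← this]; ring
  have e5 : (n+1).choose (i+1) * ((i+1).factorial * (n-i).factorial) = (n+1).factorial := by
    have := Nat.choose_mul_factorial_mul_factorial (show i+1 ≤ n+1 by omega)
    have he : n+1 - (i+1) = n-i := by omega
    rw [he] at this
    rw [← this]; ring
  have hnn : n + 1 - i = n - i + 1 := by omega
  calc (2*n).choose (2*i) * (catalan i * catalan (n-i)) * ((n+1).factorial * (n+1).factorial) * D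
      = ((2*n).choose (2*i) * ((catalan i * (i.factorial * (i+1).factorial)) *
          (catalan (n-i) * ((n-i).factorial * ((n-i)+1).factorial)))) *
          ((n+1).factorial * (n+1).factorial) := by rw [hD]; ring
    _ = ((2*n).choose (2*i) * ((2*i).factorial * (2*(n-i)).factorial)) *
          ((n+1).factorial * (n+1).factorial) := by rw [e1, e2]
    _ = (2*n).factorial * ((n+1).factorial * (n+1).factorial) := by rw [e3]
    _ = (2*n).factorial * (((n+1).choose i * (i.factorial * (n+1-i).factorial)) *
          ((n+1).choose (i+1) * ((i+1).factorial * (n-i).factorial))) := by rw [e4, e5]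
    _ = (2*n).factorial * ((n+1).choose i * ((n+1).choose (i+1))) * D := by
          rw [hD, hnn]; ring

lemma vandermonde_step (n : ℕ) :
    ∑ i ∈ range (n+1), (n+1).choose i * (n+1).choose (i+1) = (2*n+2).choose n := by
  have h := Nat.add_choose_eq (n+1) (n+1) n
  have he : n+1+(n+1) = 2*n+2 := by omega
  rw [he] at h
  rw [h, Nat.sum_antidiagonal_eq_sum_range_succ (f := fun a b => (n+1).choose a * (n+1).choose b)]
  apply Finset.sum_congr rfl
  intro i hi
  rw [mem_range] at hi
  congr 1
  have := Nat.choose_symm (show i+1 ≤ n+1 by omega)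
  have he2 : n+1-(i+1) = n-i := by omega
  rw [he2] at this
  rw [this]

theorem main_identity (n : ℕ) :
    ∑ i ∈ range (n+1), (2*n).choose (2*i) * (catalan i * catalan (n-i))
      = catalan n * catalan (n+1) := by
  set K := (n+1).factorial * (n+1).factorial with hK
  have hKpos : 0 < K := by positivity
  apply Nat.eq_of_mul_eq_mul_right hKpos
  rw [Finset.sum_mul]
  have h1 : ∀ i ∈ range (n+1), (2*n).choose (2*i) * (catalan i * catalan (n-i)) * K
      = (2*n).factorial * ((n+1).choose i * ((n+1).choose (i+1))) := fun i hi =>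
    term_eq n i (by rw [mem_range] at hi; omega)
  rw [Finset.sum_congr rfl h1, ← Finset.mul_sum, vandermonde_step]
  -- now: (2n)! * (2n+2).choose n = catalan n * catalan (n+1) * K
  set L := n.factorial * (n+2).factorial with hL
  have hLpos : 0 < L := by positivity
  apply Nat.eq_of_mul_eq_mul_right hLpos
  have e6 : (2*n+2).choose n * (n.factorial * (n+2).factorial) = (2*n+2).factorial := by
    have := Nat.choose_mul_factorial_mul_factorial (show n ≤ 2*n+2 by omega)
    have he : 2*n+2-n = n+2 := by omega
    rw [he] at this
    rw [← this]; ring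
  have e7 := catalan_factorial n
  have e8 : catalan (n+1) * ((n+1).factorial * (n+2).factorial) = (2*n+2).factorial := by
    have := catalan_factorial (n+1)
    have he : 2*(n+1) = 2*n+2 := by omega
    rw [he] at this
    rw [← this]
  calc (2*n).factorial * (2*n+2).choose n * L
      = (2*n).factorial * ((2*n+2).choose n * (n.factorial * (n+2).factorial)) := by
        rw [hL]; ring
    _ = (2*n).factorial * (2*n+2).factorial := by rw [e6]
    _ = (catalan n * (n.factorial * (n+1).factorial)) *
        (catalan (n+1) * ((n+1).factorial * (n+2).factorial)) := by rw [e7, e8]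
    _ = catalan n * catalan (n+1) * K * L := by rw [hK, hL]; ring

end Arith

end NCM

/-- Noncrossing perfect matchings of `{1,…,2n}` are counted by `C_n`, and pairs
`(M₁,M₂)` of noncrossing partial matchings partitioning `{1,…,2n}` into matched pairs
are counted by `C_n C_{n+1}`. -/
theorem stmt16 (n : ℕ) :
    Nat.card {M : Finset (Fin (2*n) × Fin (2*n)) //
        IsPartialMatching n M ∧ IsNoncrossingPM n M ∧ IsPerfect n M} = catalan n ∧
    Nat.card {p : Finset (Fin (2*n) × Fin (2*n)) × Finset (Fin (2*n) × Fin (2*n)) //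
        IsPartialMatching n p.1 ∧ IsNoncrossingPM n p.1 ∧
        IsPartialMatching n p.2 ∧ IsNoncrossingPM n p.2 ∧
        Disjoint p.1 p.2 ∧ IsPartialMatching n (p.1 ∪ p.2) ∧ IsPerfect n (p.1 ∪ p.2)} =
      catalan n * catalan (n + 1) := by
  classical
  constructor
  · -- part 1
    have h1 : Nat.card {M : Finset (Fin (2*n) × Fin (2*n)) //
        IsPartialMatching n M ∧ IsNoncrossingPM n M ∧ IsPerfect n M}
        = NCM.ncount (univ : Finset (Fin (2*n))) := by
      rw [NCM.ncount]
      apply Nat.card_congr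
      apply Equiv.subtypeEquivRight
      intro M
      constructor
      · rintro ⟨h1, h2, h3⟩
        exact ⟨h1, h2, fun p _ => ⟨mem_univ _, mem_univ _⟩, fun x _ => h3 x⟩
      · rintro ⟨h1, h2, h3⟩
        exact ⟨h1, h2, fun x => h3.2 x (mem_univ x)⟩
    rw [h1]
    exact NCM.ncount_eq_catalan _ (by simp)
  · -- part 2
    have h2 : Nat.card {p : Finset (Fin (2*n) × Fin (2*n)) × Finset (Fin (2*n) × Fin (2*n)) //
        IsPartialMatching n p.1 ∧ IsNoncrossingPM n p.1 ∧
        IsPartialMatching n p.2 ∧ IsNoncrossingPM n p.2 ∧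
        Disjoint p.1 p.2 ∧ IsPartialMatching n (p.1 ∪ p.2) ∧ IsPerfect n (p.1 ∪ p.2)}
        = Nat.card {q : Finset (Fin (2*n) × Fin (2*n)) × Finset (Fin (2*n) × Fin (2*n)) //
            NCM.Q (univ : Finset (Fin (2*n))) q} := by
      apply Nat.card_congr
      apply Equiv.subtypeEquivRight
      intro q
      constructor
      · rintro ⟨h1, h2, h3, h4, h5, h6, h7⟩
        exact ⟨h1, h2, h3, h4, h5, h6, fun p _ => ⟨mem_univ _, mem_univ _⟩,
          fun x _ => h7 x⟩
      · rintro ⟨h1, h2, h3, h4, h5, h6, h7⟩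
        exact ⟨h1, h2, h3, h4, h5, h6, fun x => h7.2 x (mem_univ x)⟩
    rw [h2, Nat.card_eq_fintype_card, Fintype.card_subtype, NCM.pairs_count n,
      NCM.main_identity n]
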